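/- Let f ∈ L¹(0,∞) ∩ L^∞(0,∞) be nonnegative and absolutely continuous with f' ∈ L²(0,∞). Then f(t) → 0 as t → ∞. -/

import Mathlib

open MeasureTheory Filter

/-- If `f : [0,∞) → [0,∞)` is differentiable with `f ∈ L¹ ∩ L^∞` and `f' ∈ L²`, then
`f(t) → 0` as `t → ∞`. -/
theorem stmt_14 (f f' : ℝ → ℝ)
    (hpos : ∀ t, 0 ≤ t → 0 ≤ f t)
    (hderiv : ∀ t, 0 ≤ t → HasDerivAt f (f' t) t)
    (hL1 : IntegrableOn f (Set.Ioi 0))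
    (hbdd : ∃ M : ℝ, ∀ t, 0 ≤ t → f t ≤ M)
    (hL2 : IntegrableOn (fun t => (f' t) ^ 2) (Set.Ioi 0)) :
    Tendsto f atTop (nhds 0) := by
  obtain ⟨M, hM⟩ := hbdd
  have hM0 : 0 ≤ M := le_trans (hpos 0 le_rfl) (hM 0 le_rfl)
  -- g = f^2
  set g : ℝ → ℝ := fun t => f t ^ 2 with hg
  have hgderiv : ∀ x ∈ Set.Ioi (0:ℝ), HasDerivAt g (2 * f x * f' x) x := by
    intro x hx
    have := (hderiv x hx.le).fun_pow 2
    simpa [mul_comm, mul_assoc, mul_left_comm] using this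
  -- measurability of f on Ioi 0
  have hfmeas : AEStronglyMeasurable f (volume.restrict (Set.Ioi 0)) := hL1.aestronglyMeasurable
  have hf'meas : AEStronglyMeasurable f' (volume.restrict (Set.Ioi 0)) := by
    have : ∀ x ∈ Set.Ioi (0:ℝ), f' x = deriv f x := fun x hx =>
      ((hderiv x hx.le).deriv).symm
    exact (aestronglyMeasurable_deriv f _).congr
      ((ae_restrict_iff' measurableSet_Ioi).2 (Filter.Eventually.of_forall
        fun x hx => (this x hx).symm))
  -- f^2 integrable on Ioi 0
  have hgint : IntegrableOn g (Set.Ioi 0) := by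
    refine Integrable.mono' (hL1.smul M) (hfmeas.mul hfmeas |>.congr ?_) ?_
    · filter_upwards with x; simp [hg, sq]
    · refine (ae_restrict_iff' measurableSet_Ioi).2 (Filter.Eventually.of_forall fun x hx => ?_)
      have h0 := hpos x hx.le
      have : f x ^ 2 ≤ M * f x := by nlinarith [hM x hx.le]
      simpa [hg, abs_of_nonneg (pow_nonneg h0 2)] using this
  -- g' integrable on Ioi 0
  have hg'int : IntegrableOn (fun x => 2 * f x * f' x) (Set.Ioi 0) := by
    refine Integrable.mono' (hgint.add hL2) ?_ ?_
    · exact ((hfmeas.const_mul 2).mul hf'meas)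
    · refine (ae_restrict_iff' measurableSet_Ioi).2 (Filter.Eventually.of_forall fun x hx => ?_)
      show ‖2 * f x * f' x‖ ≤ g x + f' x ^ 2
      rw [Real.norm_eq_abs, mul_assoc, abs_mul, abs_mul, abs_two]
      have h1 := sq_abs (f x); have h2 := sq_abs (f' x)
      have h3 := sq_nonneg (|f x| - |f' x|)
      simp only [hg]
      nlinarith
  -- g tends to a limit L
  have hgtend : Tendsto g atTop (nhds (limUnder atTop g)) :=
    tendsto_limUnder_of_hasDerivAt_of_integrableOn_Ioi hgderiv hg'int
  set L := limUnder atTop g with hL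
  -- L = 0
  have hL0 : L = 0 := by
    by_contra hne
    have hLnonneg : 0 ≤ L :=
      ge_of_tendsto hgtend ((eventually_ge_atTop (0:ℝ)).mono fun x hx =>
        pow_nonneg (hpos x hx) 2)
    have hLpos : 0 < L := lt_of_le_of_ne hLnonneg (Ne.symm hne)
    -- eventually g ≥ L/2
    obtain ⟨T, hT⟩ := (hgtend.eventually (eventually_gt_nhds (half_lt_self hLpos))).exists_forall_of_atTop
    have hT' : ∀ x ∈ Set.Ioi (max T 0), L / 2 ≤ g x := fun x hx =>
      (hT x (le_trans (le_max_left _ _) hx.le)).le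
    have hconst : IntegrableOn (fun _ : ℝ => L / 2) (Set.Ioi (max T 0)) := by
      refine Integrable.mono' (hgint.mono_set fun x hx =>
        Set.mem_Ioi.2 (lt_of_le_of_lt (le_max_right _ _) (Set.mem_Ioi.1 hx))) aestronglyMeasurable_const ?_
      refine (ae_restrict_iff' measurableSet_Ioi).2 (Filter.Eventually.of_forall fun x hx => ?_)
      rw [Real.norm_eq_abs, abs_of_nonneg (by positivity)]
      exact hT' x hx
    rw [integrableOn_const_iff] at hconst
    rcases hconst with h | h
    · exact absurd (enorm_eq_zero.1 h) (by positivity)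
    · simp [Real.volume_Ioi] at h
  rw [hL0] at hgtend
  -- conclude
  have hsq : Tendsto (fun t => Real.sqrt (g t)) atTop (nhds 0) := by
    have := (Real.continuous_sqrt.tendsto 0).comp hgtend
    simpa [Function.comp_def] using this
  refine hsq.congr' ?_
  filter_upwards [eventually_ge_atTop (0:ℝ)] with x hx
  simp [hg, Real.sqrt_sq (hpos x hx)]
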